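/- Let F ⊆ ℝ^d have nonempty relative interior with respect to affine(F), let r = dim affine(F), let L be the linear subspace associated with affine(F), and let Z ∈ ℝ^{d×r} have columns forming an orthonormal basis of L. If A ∈ ℝ^{k×d} is such that S(f) = A f satisfies the improvement objective on F (for all f, f' ∈ F, A f' ≥ A f elementwise implies f' ≥ f elementwise), then k ≥ ConeRank(Z). -/

import Mathlib

/-- The polyhedral cone generated by the rows of a matrix `W`:
the set of nonnegative linear combinations `λᵀ W` of the rows of `W`. -/
def coneOf {m n : ℕ} (W : Matrix (Fin m) (Fin n) ℝ) : Set (Fin n → ℝ) :=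
  {x | ∃ l : Fin m → ℝ, 0 ≤ l ∧ x = Matrix.vecMul l W}

/-- `ConeRank(W)`: the minimum `k` such that there exists `V ∈ ℝ^{k×n}` with `K_W ⊆ K_V`. -/
noncomputable def coneRank {m n : ℕ} (W : Matrix (Fin m) (Fin n) ℝ) : ℕ :=
  sInf {k : ℕ | ∃ V : Matrix (Fin k) (Fin n) ℝ, coneOf W ⊆ coneOf V}

open scoped InnerProductSpace
open Finset

/-- cone generated by a finite family of vectors in a module -/
def coneSet {E : Type*} [AddCommGroup E] [Module ℝ E] {m : ℕ} (w : Fin m → E) : Set E :=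
  {x | ∃ l : Fin m → ℝ, (∀ i, 0 ≤ l i) ∧ x = ∑ i, l i • w i}

/-- Conic Carathéodory. -/
lemma cone_caratheodory {E : Type*} [AddCommGroup E] [Module ℝ E] {m : ℕ} (w : Fin m → E) :
    ∀ (s : Finset (Fin m)) (l : Fin m → ℝ), (∀ i, 0 ≤ l i) →
    ∃ t : Finset (Fin m), t ⊆ s ∧ LinearIndependent ℝ (fun i : t => w i) ∧
      ∃ μ : Fin m → ℝ, (∀ i, 0 ≤ μ i) ∧ ∑ i ∈ s, l i • w i = ∑ i ∈ t, μ i • w i := by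
  intro s
  induction s using Finset.strongInduction with
  | _ s ih =>
    intro l hl
    by_cases hind : LinearIndependent ℝ (fun i : s => w i)
    · exact ⟨s, Finset.Subset.refl s, hind, l, hl, rfl⟩
    have key : ∀ c : Fin m → ℝ, (∀ i ∉ s, c i = 0) → (∑ i ∈ s, c i • w i = 0) →
        (∃ i ∈ s, 0 < c i) →
        ∃ t : Finset (Fin m), t ⊆ s ∧ LinearIndependent ℝ (fun i : t => w i) ∧
          ∃ μ : Fin m → ℝ, (∀ i, 0 ≤ μ i) ∧ ∑ i ∈ s, l i • w i = ∑ i ∈ t, μ i • w i := by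
      rintro c hc0 hcsum ⟨i₁, hi₁s, hi₁⟩
      have hne : (s.filter (fun i => 0 < c i)).Nonempty :=
        ⟨i₁, Finset.mem_filter.mpr ⟨hi₁s, hi₁⟩⟩
      obtain ⟨i₀, hi₀, hmin⟩ :=
        Finset.exists_min_image (s.filter (fun i => 0 < c i)) (fun i => l i / c i) hne
      rw [Finset.mem_filter] at hi₀
      obtain ⟨hi₀s, hci₀⟩ := hi₀
      set r := l i₀ / c i₀ with hrdef
      have hr : 0 ≤ r := div_nonneg (hl i₀) hci₀.le
      set l' : Fin m → ℝ := fun i => l i - r * c i with hl'def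
      have hl' : ∀ i, 0 ≤ l' i := by
        intro i
        by_cases his : i ∈ s
        · by_cases hci : 0 < c i
          · have hm := hmin i (Finset.mem_filter.mpr ⟨his, hci⟩)
            have : r * c i ≤ l i := by
              rw [le_div_iff₀ hci] at hm; linarith
            simp only [hl'def]; linarith
          · push_neg at hci
            have : r * c i ≤ 0 := mul_nonpos_of_nonneg_of_nonpos hr hci
            simp only [hl'def]; linarith [hl i]
        · simp only [hl'def, hc0 i his, mul_zero, sub_zero]; exact hl i
      have hsum' : ∑ i ∈ s, l' i • w i = ∑ i ∈ s, l i • w i := by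
        simp only [hl'def, sub_smul, mul_smul, Finset.sum_sub_distrib]
        rw [← Finset.smul_sum, hcsum, smul_zero, sub_zero]
      have hl'i₀ : l' i₀ = 0 := by
        simp only [hl'def, hrdef]
        field_simp
        ring
      obtain ⟨t, hts, hli, μ, hμ, hsum⟩ := ih (s.erase i₀) (Finset.erase_ssubset hi₀s) l' hl'
      refine ⟨t, hts.trans (Finset.erase_subset _ _), hli, μ, hμ, ?_⟩
      have herase : ∑ i ∈ s.erase i₀, l' i • w i = ∑ i ∈ s, l' i • w i :=
        Finset.sum_erase s (by rw [hl'i₀, zero_smul])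
      rw [← hsum', ← herase, hsum]
    obtain ⟨g, hgsum, i₁, hgi₁⟩ := Fintype.not_linearIndependent_iff.mp hind
    set c : Fin m → ℝ := fun i => if h : i ∈ s then g ⟨i, h⟩ else 0 with hcdef
    have hc0 : ∀ i ∉ s, c i = 0 := fun i hi => by simp [hcdef, hi]
    have hcsum : ∑ i ∈ s, c i • w i = 0 := by
      rw [← hgsum, ← Finset.sum_coe_sort s (fun i => c i • w i)]
      refine Finset.sum_congr rfl fun i _ => ?_
      simp [hcdef, i.2]
    have hci₁ : c ↑i₁ ≠ 0 := by simpa [hcdef, i₁.2] using hgi₁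
    by_cases hpos : ∃ i ∈ s, 0 < c i
    · exact key c hc0 hcsum hpos
    · push_neg at hpos
      refine key (fun i => -c i) (fun i hi => by simp [hc0 i hi]) ?_ ?_
      · simp only [neg_smul, Finset.sum_neg_distrib, hcsum, neg_zero]
      · refine ⟨↑i₁, i₁.2, ?_⟩
        have := hpos ↑i₁ i₁.2
        have : c ↑i₁ < 0 := lt_of_le_of_ne this hci₁
        show 0 < -c ↑i₁
        linarith

lemma isClosed_coneSet {n m : ℕ} (w : Fin m → EuclideanSpace ℝ (Fin n)) :
    IsClosed (coneSet w) := by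
  have hrep : coneSet w = ⋃ t : Finset (Fin m), ⋃ (_ : LinearIndependent ℝ fun i : t => w i),
      {x : EuclideanSpace ℝ (Fin n) | ∃ μ : t → ℝ, (∀ i, 0 ≤ μ i) ∧ x = ∑ i, μ i • w i} := by
    ext x
    simp only [Set.mem_iUnion, Set.mem_setOf_eq]
    constructor
    · rintro ⟨l, hl, rfl⟩
      obtain ⟨t, -, hli, μ, hμ, hsum⟩ := cone_caratheodory w Finset.univ l hl
      refine ⟨t, hli, fun i => μ i, fun i => hμ i, ?_⟩
      rw [Finset.sum_coe_sort t (fun i => μ i • w i)]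
      exact hsum
    · rintro ⟨t, hli, μ, hμ, rfl⟩
      refine ⟨fun i => if h : i ∈ t then μ ⟨i, h⟩ else 0, fun i => ?_, ?_⟩
      · by_cases h : i ∈ t
        · simpa [h] using hμ ⟨i, h⟩
        · simp [h]
      · have h1 : ∑ i : Fin m, (if h : i ∈ t then μ ⟨i, h⟩ else 0) • w i
            = ∑ i ∈ t, (if h : i ∈ t then μ ⟨i, h⟩ else 0) • w i :=
          (Finset.sum_subset (Finset.subset_univ t) (fun i _ hi => by simp [hi])).symm
        have h2 : ∑ i ∈ t, (if h : i ∈ t then μ ⟨i, h⟩ else 0) • w i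
            = ∑ i : t, μ i • w ↑i := by
          rw [← Finset.sum_coe_sort t (fun i => (if h : i ∈ t then μ ⟨i, h⟩ else 0) • w i)]
          exact Finset.sum_congr rfl fun i _ => by simp [i.2]
        exact (h1.trans h2).symm
  rw [hrep]
  refine isClosed_iUnion_of_finite fun t => ?_
  classical
  by_cases hli : LinearIndependent ℝ fun i : t => w i
  · rw [Set.iUnion_eq_if, if_pos hli]
    let f : (↥t → ℝ) →ₗ[ℝ] EuclideanSpace ℝ (Fin n) :=
      { toFun := fun μ => ∑ i, μ i • w i
        map_add' := by intro a b; simp [add_smul, Finset.sum_add_distrib]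
        map_smul' := by intro c a; simp [smul_smul, Finset.smul_sum]  }
    have hker : LinearMap.ker f = ⊥ := by
      rw [LinearMap.ker_eq_bot']
      intro μ hμ
      have := Fintype.linearIndependent_iff.mp hli μ hμ
      funext i; exact this i
    have hemb := f.isClosedEmbedding_of_injective hker
    have himg : {x : EuclideanSpace ℝ (Fin n) | ∃ μ : t → ℝ, (∀ i, 0 ≤ μ i) ∧ x = ∑ i, μ i • w i}
        = f '' {μ | ∀ i, 0 ≤ μ i} := by
      ext x
      simp only [Set.mem_image, Set.mem_setOf_eq]
      constructor
      · rintro ⟨μ, hμ, rfl⟩; exact ⟨μ, hμ, rfl⟩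
      · rintro ⟨μ, hμ, rfl⟩; exact ⟨μ, hμ, rfl⟩
    rw [himg]
    refine hemb.isClosedMap _ ?_
    have : {μ : ↥t → ℝ | ∀ i, 0 ≤ μ i} = ⋂ i, {μ | 0 ≤ μ i} := by ext; simp
    rw [this]
    exact isClosed_iInter fun i => isClosed_le continuous_const (continuous_apply i)
  · rw [Set.iUnion_eq_if, if_neg hli]
    exact isClosed_empty

lemma farkas_cone {n m : ℕ} (w : Fin m → EuclideanSpace ℝ (Fin n)) (b : EuclideanSpace ℝ (Fin n))
    (h : ∀ y : EuclideanSpace ℝ (Fin n), (∀ i, 0 ≤ ⟪w i, y⟫_ℝ) → 0 ≤ ⟪b, y⟫_ℝ) :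
    b ∈ coneSet w := by
  by_contra hb
  let K : ConvexCone ℝ (EuclideanSpace ℝ (Fin n)) :=
    { carrier := coneSet w
      smul_mem' := by
        rintro c hc x ⟨l, hl, rfl⟩
        exact ⟨fun i => c * l i, fun i => mul_nonneg hc.le (hl i),
          by rw [Finset.smul_sum]; simp [smul_smul]⟩
      add_mem' := by
        rintro x ⟨l, hl, rfl⟩ y ⟨l', hl', rfl⟩
        exact ⟨fun i => l i + l' i, fun i => add_nonneg (hl i) (hl' i),
          by simp [add_smul, Finset.sum_add_distrib]⟩ }
  have hKne : (↑K : Set (EuclideanSpace ℝ (Fin n))).Nonempty := ⟨0, ⟨0, fun i => le_refl 0, by simp⟩⟩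
  have hKcl : IsClosed (↑K : Set (EuclideanSpace ℝ (Fin n))) := isClosed_coneSet w
  obtain ⟨y, hy1, hy2⟩ : ∃ y, (∀ x ∈ K, 0 ≤ ⟪x, y⟫_ℝ) ∧ ⟪y, b⟫_ℝ < 0 := by
    let C : ProperCone ℝ (EuclideanSpace ℝ (Fin n)) :=
      { carrier := coneSet w
        zero_mem' := ⟨0, fun i => le_refl 0, by simp⟩
        add_mem' := fun hx hy => K.add_mem' hx hy
        smul_mem' := by
          rintro c x ⟨l, hl, rfl⟩
          exact ⟨fun i => (c : ℝ) * l i, fun i => mul_nonneg c.2 (hl i),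
            by rw [Finset.smul_sum]; exact Finset.sum_congr rfl fun i _ => by rw [mul_smul]; rfl⟩
        isClosed' := hKcl }
    obtain ⟨y, hy1, hy2⟩ := ProperCone.hyperplane_separation' C (x₀ := b) hb
    exact ⟨y, hy1, by rw [real_inner_comm]; exact hy2⟩
  have hw : ∀ i, w i ∈ coneSet w := by
    intro i
    refine ⟨fun j => if j = i then 1 else 0, fun j => by dsimp only; split <;> norm_num, ?_⟩
    simp [ite_smul]
  have hby := h y (fun i => hy1 (w i) (hw i))
  rw [real_inner_comm] at hy2
  linarith

lemma vecMul_eq_sum' {m n : ℕ} (l : Fin m → ℝ) (W : Matrix (Fin m) (Fin n) ℝ) :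
    Matrix.vecMul l W = ∑ i, l i • W i := by
  funext j
  rw [Finset.sum_apply]
  simp [Matrix.vecMul, dotProduct]

lemma coneOf_eq_coneSet {m n : ℕ} (W : Matrix (Fin m) (Fin n) ℝ) :
    coneOf W = WithLp.toLp 2 ⁻¹' coneSet (fun i => (WithLp.toLp 2 (W i) : EuclideanSpace ℝ (Fin n))) := by
  ext x
  constructor
  · rintro ⟨l, hl, rfl⟩
    exact ⟨l, fun i => hl i, by rw [vecMul_eq_sum']; simp [WithLp.toLp_sum]⟩
  · rintro ⟨l, hl, h⟩
    exact ⟨l, fun i => hl i, by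
      rw [vecMul_eq_sum']; simpa [WithLp.ofLp_sum] using congrArg WithLp.ofLp h⟩

lemma farkas_matrix {m n : ℕ} (W : Matrix (Fin m) (Fin n) ℝ) (b : Fin n → ℝ)
    (h : ∀ y : Fin n → ℝ, 0 ≤ W.mulVec y → (0:ℝ) ≤ ∑ j, b j * y j) :
    b ∈ coneOf W := by
  rw [coneOf_eq_coneSet, Set.mem_preimage]
  apply farkas_cone
  intro y hy
  have hinner : ∀ u : EuclideanSpace ℝ (Fin n), ⟪u, y⟫_ℝ = ∑ j, u j * y j := by
    intro u
    simp [PiLp.inner_apply, RCLike.inner_apply, conj_trivial, mul_comm]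
  rw [hinner]
  apply h
  intro i
  have := hy i
  rw [hinner] at this
  exact this

lemma coneOf_subset_of_rows {m k n : ℕ} (W : Matrix (Fin m) (Fin n) ℝ)
    (V : Matrix (Fin k) (Fin n) ℝ) (h : ∀ i, (W i) ∈ coneOf V) :
    coneOf W ⊆ coneOf V := by
  rintro x ⟨l, hl, rfl⟩
  choose μ hμ hWv using h
  refine ⟨fun p => ∑ i, l i * μ i p, fun p => Finset.sum_nonneg fun i _ =>
    mul_nonneg (hl i) (hμ i p), ?_⟩
  funext j
  have hWij : ∀ i, W i j = ∑ p, μ i p * V p j := by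
    intro i
    have := congrFun (hWv i) j
    simpa [Matrix.vecMul, dotProduct] using this
  simp only [Matrix.vecMul, dotProduct]
  calc ∑ i, l i * W i j = ∑ i, ∑ p, l i * (μ i p * V p j) := by
        refine Finset.sum_congr rfl fun i _ => ?_
        rw [hWij i, Finset.mul_sum]
    _ = ∑ p, ∑ i, l i * (μ i p * V p j) := Finset.sum_comm
    _ = ∑ p, (∑ i, l i * μ i p) * V p j := by
        refine Finset.sum_congr rfl fun p _ => ?_
        rw [Finset.sum_mul]
        exact Finset.sum_congr rfl fun i _ => by ring

/-- Let `F ⊆ ℝ^d` have nonempty relative interior with respect to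
`affine(F)`, let `r = dim affine(F)`, `L` the linear subspace associated with `affine(F)`
(`L = vectorSpan ℝ F`), and `Z ∈ ℝ^{d×r}` a matrix whose columns form an orthonormal basis
of `L`.  If `A ∈ ℝ^{k×d}` is such that `S(f) = A f` satisfies the improvement objective on
`F`, then `k ≥ ConeRank(Z)`. -/
theorem improvement_linear_necessary {d r k : ℕ}
    (F : Set (Fin d → ℝ))
    (hri : ∃ f₀ ∈ F, ∃ R : ℝ, 0 < R ∧
      ∀ g : Fin d → ℝ, g ∈ affineSpan ℝ F → (∑ i, (g i - f₀ i) ^ 2) ≤ R ^ 2 → g ∈ F)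
    (Z : Matrix (Fin d) (Fin r) ℝ)
    (hr : r = Module.finrank ℝ ↥(vectorSpan ℝ F))
    (hZorth : ∀ j j' : Fin r, (∑ i, Z i j * Z i j') = if j = j' then (1 : ℝ) else 0)
    (hZspan : vectorSpan ℝ F =
      Submodule.span ℝ (Set.range fun j : Fin r => fun i : Fin d => Z i j))
    (A : Matrix (Fin k) (Fin d) ℝ)
    (himp : ∀ f ∈ F, ∀ f' ∈ F, A.mulVec f ≤ A.mulVec f' → f ≤ f') :
    coneRank Z ≤ k := by
  obtain ⟨f₀, hf₀F, R, hR, hball⟩ := hri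
  have key : ∀ y : Fin r → ℝ, 0 ≤ (A * Z).mulVec y → 0 ≤ Z.mulVec y := by
    intro y hy
    set w := Z.mulVec y with hw
    have hAw : 0 ≤ A.mulVec w := by rwa [hw, Matrix.mulVec_mulVec]
    have hwL : w ∈ vectorSpan ℝ F := by
      rw [hZspan]
      have hsum : w = ∑ j, y j • (fun i => Z i j) := by
        funext i
        rw [Finset.sum_apply]
        simp [hw, Matrix.mulVec, dotProduct, mul_comm]
      rw [hsum]
      exact Submodule.sum_mem _ fun j _ =>
        Submodule.smul_mem _ _ (Submodule.subset_span ⟨j, rfl⟩)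
    set s := Real.sqrt (∑ i, w i ^ 2) with hs
    have hs0 : 0 ≤ s := Real.sqrt_nonneg _
    set ε := R / (s + 1) with hε
    have hε0 : 0 < ε := div_pos hR (by linarith)
    set g : Fin d → ℝ := fun i => f₀ i + ε * w i with hg
    have hgspan : g ∈ affineSpan ℝ F := by
      have h1 : g = (ε • w) +ᵥ f₀ := by
        funext i; simp [hg]; ring
      rw [h1]
      refine AffineSubspace.vadd_mem_of_mem_direction ?_ (mem_affineSpan ℝ hf₀F)
      rw [direction_affineSpan]
      exact Submodule.smul_mem _ _ hwL
    have hdist : (∑ i, (g i - f₀ i) ^ 2) ≤ R ^ 2 := by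
      have h2 : ∑ i, (g i - f₀ i) ^ 2 = ε ^ 2 * ∑ i, w i ^ 2 := by
        rw [Finset.mul_sum]
        refine Finset.sum_congr rfl fun i _ => ?_
        simp [hg]; ring
      rw [h2]
      have hsq : ∑ i, w i ^ 2 = s ^ 2 := (Real.sq_sqrt (by positivity)).symm
      rw [hsq]
      have hεs : ε * s ≤ R := by
        rw [hε, div_mul_eq_mul_div, div_le_iff₀ (by linarith)]
        nlinarith
      nlinarith [mul_nonneg hε0.le hs0]
    have hgF : g ∈ F := hball g hgspan hdist
    have hle : A.mulVec f₀ ≤ A.mulVec g := by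
      have h3 : g = f₀ + ε • w := by funext i; simp [hg]
      rw [h3, Matrix.mulVec_add, Matrix.mulVec_smul]
      exact le_add_of_nonneg_right (smul_nonneg hε0.le hAw)
    have hff : f₀ ≤ g := himp f₀ hf₀F g hgF hle
    intro i
    have hgi := hff i
    simp only [hg] at hgi
    have hwi : 0 ≤ w i := by nlinarith
    exact hwi
  have hrow : ∀ i, (Z i) ∈ coneOf (A * Z) := by
    intro i
    apply farkas_matrix
    intro y hy
    have h4 := key y hy i
    simpa [Matrix.mulVec, dotProduct] using h4
  exact Nat.sInf_le ⟨A * Z, coneOf_subset_of_rows Z (A * Z) hrow⟩
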